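/- Let (R,m,k) be an artinian local ring and let E be an injective envelope of k over R. Then Hom_R(E,R) contains an R-submodule L with m·L = 0 and dim_k L = (dim_k soc(R))²; equivalently, there is a short exact sequence 0 → L → Hom_R(E,R) → M → 0 of R-modules with m·L = 0 and dim_k L = (type(R))². -/

import Mathlib

open IsLocalRing

universe u

/-- `(E, ι)` is an injective envelope of the residue field `k` over `R`: `E` is injective,
`ι : k → E` is injective, and the image of `ι` is essential in `E`. -/
def IsInjectiveEnvelopeOfResidueField (R : Type u) [CommRing R] [IsLocalRing R]
    (E : Type u) [AddCommGroup E] [Module R E] (ι : ResidueField R →ₗ[R] E) : Prop :=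
  Module.Injective R E ∧ Function.Injective ι ∧
    ∀ N : Submodule R E, N ≠ ⊥ → N ⊓ LinearMap.range ι ≠ ⊥

namespace Stmt15Aux

section Generic

variable {R : Type u} [CommRing R]

/-- Torsion elements of a hom module are the homs into the torsion submodule. -/
noncomputable def torsionHomEquiv (X M : Type u) [AddCommGroup X] [Module R X]
    [AddCommGroup M] [Module R M] (s : Set R) :
    (Submodule.torsionBySet R (X →ₗ[R] M) s) ≃ₗ[R]
      (X →ₗ[R] (Submodule.torsionBySet R M s)) where
  toFun F := LinearMap.codRestrict _ F.1 (fun x => (Submodule.mem_torsionBySet_iff _ _).mpr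
    (fun a => by
      have h := (Submodule.mem_torsionBySet_iff _ _).mp F.2 a
      show (a : R) • F.1 x = 0
      rw [show (a : R) • F.1 x = ((a : R) • F.1) x from rfl, h]
      rfl))
  map_add' F G := by apply LinearMap.ext; intro x; apply Subtype.ext; rfl
  map_smul' r F := by apply LinearMap.ext; intro x; apply Subtype.ext; rfl
  invFun g := ⟨(Submodule.torsionBySet R M s).subtype ∘ₗ g,
    (Submodule.mem_torsionBySet_iff _ _).mpr (fun a => by
      apply LinearMap.ext; intro x
      have h := (Submodule.mem_torsionBySet_iff _ _).mp (g x).2 a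
      show (a : R) • ((g x : M)) = 0
      exact h)⟩
  left_inv F := by apply Subtype.ext; apply LinearMap.ext; intro x; rfl
  right_inv g := by apply LinearMap.ext; intro x; apply Subtype.ext; rfl

/-- Torsion submodules correspond under a linear equivalence. -/
noncomputable def torsionCongr {M N : Type u} [AddCommGroup M] [Module R M]
    [AddCommGroup N] [Module R N] (e : M ≃ₗ[R] N) (s : Set R) :
    (Submodule.torsionBySet R M s) ≃ₗ[R] (Submodule.torsionBySet R N s) :=
  (e.submoduleMap (Submodule.torsionBySet R M s)).trans (LinearEquiv.ofEq _ _ (by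
    apply le_antisymm
    · rintro _ ⟨x, hx, rfl⟩
      exact (Submodule.mem_torsionBySet_iff _ _).mpr (fun a => by
        have h := (Submodule.mem_torsionBySet_iff _ _).mp hx a
        show (a : R) • (e : M →ₗ[R] N) x = 0
        rw [← map_smul, h, map_zero])
    · intro y hy
      refine ⟨e.symm y, (Submodule.mem_torsionBySet_iff _ _).mpr (fun a => ?_), by simp⟩
      have h := (Submodule.mem_torsionBySet_iff _ _).mp hy a
      rw [show (a : R) • e.symm y = e.symm ((a : R) • y) from (map_smul e.symm _ _).symm, h,
        map_zero]))

/-- Homs into a product. -/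
noncomputable def homPiEquiv (X : Type u) [AddCommGroup X] [Module R X] {ι : Type*}
    [Fintype ι] (M : Type u) [AddCommGroup M] [Module R M] :
    (X →ₗ[R] (ι → M)) ≃ₗ[R] (ι → (X →ₗ[R] M)) where
  toFun f i := (LinearMap.proj i) ∘ₗ f
  map_add' f g := by funext i; apply LinearMap.ext; intro x; rfl
  map_smul' r f := by funext i; apply LinearMap.ext; intro x; rfl
  invFun g := LinearMap.pi g
  left_inv f := by apply LinearMap.ext; intro x; rfl
  right_inv g := by funext i; apply LinearMap.ext; intro x; rfl

variable (R) in
/-- The natural biduality map `M → Hom(Hom(M,E),E)`. -/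
noncomputable def eta (E : Type u) [AddCommGroup E] [Module R E]
    (M : Type u) [AddCommGroup M] [Module R M] :
    M →ₗ[R] ((M →ₗ[R] E) →ₗ[R] E) where
  toFun x :=
    { toFun := fun f => f x
      map_add' := fun f g => rfl
      map_smul' := fun r f => rfl }
  map_add' x y := by apply LinearMap.ext; intro f; exact map_add f x y
  map_smul' r x := by apply LinearMap.ext; intro f; exact map_smul f r x

@[simp] lemma eta_apply (E : Type u) [AddCommGroup E] [Module R E]
    (M : Type u) [AddCommGroup M] [Module R M] (x : M)
    (f : M →ₗ[R] E) : eta R E M x f = f x := rfl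

end Generic

section Local

variable {R : Type u} [CommRing R] [IsLocalRing R]

lemma smul_residue {a : R} (ha : a ∈ maximalIdeal R) (c : ResidueField R) : a • c = 0 := by
  obtain ⟨r, rfl⟩ := Ideal.Quotient.mk_surjective (I := maximalIdeal R) c
  show a • Ideal.Quotient.mk (maximalIdeal R) r = 0
  have h : a • Ideal.Quotient.mk (maximalIdeal R) r
      = Ideal.Quotient.mk (maximalIdeal R) (a * r) := by
    rw [show a * r = a • r from rfl]
    exact (Submodule.Quotient.mk_smul (maximalIdeal R) a r)
  rw [h, Ideal.Quotient.eq_zero_iff_mem]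
  exact Ideal.mul_mem_right r _ ha

variable {E : Type u} [AddCommGroup E] [Module R E]

lemma socE_eq (ι : ResidueField R →ₗ[R] E) (hι : Function.Injective ι)
    (hess : ∀ N : Submodule R E, N ≠ ⊥ → N ⊓ LinearMap.range ι ≠ ⊥) :
    Submodule.torsionBySet R E (maximalIdeal R : Set R) = LinearMap.range ι := by
  apply le_antisymm
  · intro x hx
    by_cases hx0 : x = 0
    · rw [hx0]; exact Submodule.zero_mem _
    · have hN : Submodule.span R {x} ≠ ⊥ := by
        simpa [Submodule.span_singleton_eq_bot] using hx0
      obtain ⟨y, hy, hy0⟩ := (Submodule.ne_bot_iff _).mp (hess _ hN)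
      obtain ⟨hy1, hy2⟩ := Submodule.mem_inf.mp hy
      obtain ⟨r, rfl⟩ := Submodule.mem_span_singleton.mp hy1
      have hr : r ∉ maximalIdeal R := by
        intro hr
        exact hy0 ((Submodule.mem_torsionBySet_iff _ _).mp hx ⟨r, hr⟩)
      have hu : IsUnit r := by
        by_contra hnu
        exact hr ((IsLocalRing.mem_maximalIdeal r).mpr hnu)
      obtain ⟨u, rfl⟩ := hu
      have h2 : ((u⁻¹ : Rˣ) : R) • ((u : R) • x) ∈ LinearMap.range ι :=
        Submodule.smul_mem _ _ hy2
      rwa [smul_smul, Units.inv_mul, one_smul] at h2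
  · rintro _ ⟨c, rfl⟩
    exact (Submodule.mem_torsionBySet_iff _ _).mpr (fun a => by
      rw [← map_smul, smul_residue a.2, map_zero])

lemma exists_hom_ne_zero (ι : ResidueField R →ₗ[R] E) (hinj : Module.Injective R E)
    (hι : Function.Injective ι) {M : Type u} [AddCommGroup M] [Module R M]
    {x : M} (hx : x ≠ 0) : ∃ f : M →ₗ[R] E, f x ≠ 0 := by
  set T := LinearMap.toSpanSingleton R M x with hT
  have hker : LinearMap.ker T ≠ ⊤ := by
    intro h
    apply hx
    have h1 : (1 : R) ∈ LinearMap.ker T := h ▸ Submodule.mem_top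
    simpa [hT, LinearMap.toSpanSingleton_apply] using h1
  obtain ⟨J, hJmax, hJ⟩ := Ideal.exists_le_maximal _ hker
  have hkerm : LinearMap.ker T ≤ maximalIdeal R := (IsLocalRing.eq_maximalIdeal hJmax) ▸ hJ
  set φ : R →ₗ[R] E := ι ∘ₗ (Algebra.linearMap R (ResidueField R)) with hφ
  have hle : LinearMap.ker T ≤ LinearMap.ker φ := by
    intro r hr
    rw [LinearMap.mem_ker, hφ, LinearMap.comp_apply, Algebra.linearMap_apply,
      show algebraMap R (ResidueField R) r = 0 from
        Ideal.Quotient.eq_zero_iff_mem.mpr (hkerm hr), map_zero]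
  set ψ0 : (R ⧸ LinearMap.ker T) →ₗ[R] E := Submodule.liftQ _ φ hle with hψ0
  set e := T.quotKerEquivRange with he
  obtain ⟨f, hf⟩ := hinj.out (LinearMap.range T).subtype (Submodule.injective_subtype _)
    (ψ0 ∘ₗ (e.symm : (LinearMap.range T) →ₗ[R] (R ⧸ LinearMap.ker T)))
  refine ⟨f, ?_⟩
  have hxmem : x ∈ LinearMap.range T := ⟨1, by simp [hT]⟩
  have h1 : f x = ψ0 (e.symm ⟨x, hxmem⟩) := hf ⟨x, hxmem⟩
  have h2 : e.symm ⟨x, hxmem⟩ = Submodule.Quotient.mk 1 := by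
    apply e.injective
    rw [LinearEquiv.apply_symm_apply]
    apply Subtype.ext
    rw [he, LinearMap.quotKerEquivRange_apply_mk]
    simp [hT]
  rw [h1, h2, show ψ0 (Submodule.Quotient.mk 1) = φ 1 from Submodule.liftQ_apply _ _ _]
  rw [hφ, LinearMap.comp_apply, Algebra.linearMap_apply, map_one]
  intro h0
  exact one_ne_zero (hι (h0.trans (map_zero ι).symm))

lemma eta_injective (ι : ResidueField R →ₗ[R] E) (hinj : Module.Injective R E)
    (hι : Function.Injective ι) (M : Type u) [AddCommGroup M] [Module R M] :
    Function.Injective (eta R E M) := by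
  rw [← LinearMap.ker_eq_bot, Submodule.eq_bot_iff]
  intro x hx
  by_contra hx0
  obtain ⟨f, hfx⟩ := exists_hom_ne_zero ι hinj hι hx0
  apply hfx
  have h : eta R E M x = 0 := LinearMap.mem_ker.mp hx
  calc f x = eta R E M x f := rfl
  _ = 0 := by rw [h]; rfl

lemma extend_exact (hinj : Module.Injective R E) {A B C : Type u}
    [AddCommGroup A] [Module R A] [AddCommGroup B] [Module R B] [AddCommGroup C] [Module R C]
    (f : A →ₗ[R] B) (g : B →ₗ[R] C) (hfg : LinearMap.range f = LinearMap.ker g)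
    (φ : B →ₗ[R] E) (hφ : φ ∘ₗ f = 0) : ∃ ψ : C →ₗ[R] E, ψ ∘ₗ g = φ := by
  have hle : LinearMap.ker g ≤ LinearMap.ker φ := by
    rw [← hfg]
    rintro _ ⟨a, rfl⟩
    have h := LinearMap.ext_iff.mp hφ a
    simpa using h
  set φ' := Submodule.liftQ _ φ hle with hφ'
  set e := g.quotKerEquivRange with he
  obtain ⟨ψ, hψ⟩ := hinj.out (LinearMap.range g).subtype (Submodule.injective_subtype _)
    (φ' ∘ₗ (e.symm : (LinearMap.range g) →ₗ[R] (B ⧸ LinearMap.ker g)))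
  refine ⟨ψ, ?_⟩
  apply LinearMap.ext; intro b
  have hmem : g b ∈ LinearMap.range g := ⟨b, rfl⟩
  have h1 : ψ (g b) = φ' (e.symm ⟨g b, hmem⟩) := hψ ⟨g b, hmem⟩
  have h2 : e.symm ⟨g b, hmem⟩ = Submodule.Quotient.mk b := by
    apply e.injective
    rw [LinearEquiv.apply_symm_apply]
    apply Subtype.ext
    rw [he, LinearMap.quotKerEquivRange_apply_mk]
  rw [LinearMap.comp_apply, h1, h2]
  exact Submodule.liftQ_apply _ _ _

/-- `Hom(k, E) ≃ k` for an injective envelope `E` of `k`. -/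
noncomputable def dkEquiv (ι : ResidueField R →ₗ[R] E) (hι : Function.Injective ι)
    (hess : ∀ N : Submodule R E, N ≠ ⊥ → N ⊓ LinearMap.range ι ≠ ⊥) :
    (ResidueField R →ₗ[R] E) ≃ₗ[R] ResidueField R := by
  set Φ : (ResidueField R →ₗ[R] E) →ₗ[R] E :=
    { toFun := fun f => f 1
      map_add' := fun f g => rfl
      map_smul' := fun r f => rfl } with hΦdef
  have hΦ : Function.Injective Φ := by
    intro f g h
    apply LinearMap.ext; intro c
    obtain ⟨r, rfl⟩ := Ideal.Quotient.mk_surjective (I := maximalIdeal R) c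
    have hc : (Ideal.Quotient.mk (maximalIdeal R) r : ResidueField R) = r • 1 := by
      rw [Algebra.smul_def, mul_one]
      rfl
    rw [hc]
    change f (r • (1 : ResidueField R)) = g (r • (1 : ResidueField R))
    rw [map_smul, map_smul]
    show r • Φ f = r • Φ g
    rw [h]
  have hrange : LinearMap.range Φ = LinearMap.range ι := by
    apply le_antisymm
    · rintro _ ⟨f, rfl⟩
      rw [← socE_eq ι hι hess]
      exact (Submodule.mem_torsionBySet_iff _ _).mpr (fun a => by
        show (a : R) • f 1 = 0
        rw [← map_smul, smul_residue a.2, map_zero])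
    · rintro _ ⟨c, rfl⟩
      refine ⟨ι ∘ₗ
        { toFun := fun x => c * x
          map_add' := fun x y => mul_add c x y
          map_smul' := fun r x => by
            show c * (r • x) = r • (c * x)
            exact mul_smul_comm r c x }, ?_⟩
      show ι (c * 1) = ι c
      rw [mul_one]
  exact (LinearEquiv.ofInjective Φ hΦ).trans ((LinearEquiv.ofEq _ _ hrange).trans
    (LinearEquiv.ofInjective ι hι).symm)

lemma simple_equiv_residue {S : Type u} [AddCommGroup S] [Module R S] [IsSimpleModule R S] :
    Nonempty (S ≃ₗ[R] ResidueField R) := by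
  have hnt : Nontrivial S := IsSimpleModule.nontrivial R S
  obtain ⟨x, hx⟩ := exists_ne (0 : S)
  have hmax : Ideal.IsMaximal (LinearMap.ker (LinearMap.toSpanSingleton R S x)) :=
    IsSimpleModule.ker_toSpanSingleton_isMaximal R hx
  have hsurj : Function.Surjective (LinearMap.toSpanSingleton R S x) :=
    IsSimpleModule.toSpanSingleton_surjective R hx
  have e1 := LinearMap.quotKerEquivOfSurjective _ hsurj
  have hker : LinearMap.ker (LinearMap.toSpanSingleton R S x) = maximalIdeal R :=
    IsLocalRing.eq_maximalIdeal hmax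
  set ρ : R →ₗ[R] ResidueField R := Algebra.linearMap R (ResidueField R) with hρdef
  have hρ : Function.Surjective ρ := Ideal.Quotient.mk_surjective
  have e2 := LinearMap.quotKerEquivOfSurjective ρ hρ
  have hkerρ : LinearMap.ker ρ = (maximalIdeal R : Submodule R R) := by
    ext r
    rw [LinearMap.mem_ker, hρdef, Algebra.linearMap_apply]
    exact Ideal.Quotient.eq_zero_iff_mem
  exact ⟨e1.symm.trans ((Submodule.quotEquivOfEq _ _ (by rw [hker, ← hkerρ])).trans e2)⟩

lemma eta_bij_simple (ι : ResidueField R →ₗ[R] E) (hinj : Module.Injective R E)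
    (hι : Function.Injective ι)
    (hess : ∀ N : Submodule R E, N ≠ ⊥ → N ⊓ LinearMap.range ι ≠ ⊥)
    (S : Type u) [AddCommGroup S] [Module R S] [IsSimpleModule R S] :
    Function.Bijective (eta R E S) := by
  have hinjS := eta_injective ι hinj hι S
  refine ⟨hinjS, ?_⟩
  obtain ⟨e⟩ := simple_equiv_residue (R := R) (S := S)
  have dk := dkEquiv ι hι hess
  have dd : ((S →ₗ[R] E) →ₗ[R] E) ≃ₗ[R] ResidueField R :=
    ((LinearEquiv.arrowCongr (LinearEquiv.arrowCongr e (LinearEquiv.refl R E))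
      (LinearEquiv.refl R E)).trans
      (LinearEquiv.arrowCongr dk (LinearEquiv.refl R E))).trans dk
  have hsimpk : IsSimpleModule R (ResidueField R) := by
    have h := (isSimpleModule_iff_isCoatom (m := (maximalIdeal R : Submodule R R))).mpr
      (Ideal.isMaximal_def.mp (maximalIdeal.isMaximal R))
    exact h
  have hsimp : IsSimpleModule R ((S →ₗ[R] E) →ₗ[R] E) := IsSimpleModule.congr dd
  rw [← LinearMap.range_eq_top]
  rcases eq_bot_or_eq_top (LinearMap.range (eta R E S)) with h | h
  · exfalso
    have hnt : Nontrivial S := IsSimpleModule.nontrivial R S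
    obtain ⟨x, hx⟩ := exists_ne (0 : S)
    apply hx
    apply hinjS
    have hmem : eta R E S x ∈ LinearMap.range (eta R E S) := ⟨x, rfl⟩
    rw [h, Submodule.mem_bot] at hmem
    rw [hmem, map_zero]
  · exact h

end Local

section Artinian

variable {R : Type u} [CommRing R] [IsArtinianRing R] [IsLocalRing R]

lemma isNoetherian_of_torsion {V : Type u} [AddCommGroup V] [Module R V] [IsArtinian R V]
    (hV : ∀ a ∈ maximalIdeal R, ∀ v : V, a • v = 0) : IsNoetherian R V := by
  have hT : Module.IsTorsionBySet R V ((maximalIdeal R : Ideal R) : Set R) :=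
    fun v a => hV a.1 a.2 v
  letI : Module (R ⧸ (maximalIdeal R : Ideal R)) V := hT.module
  haveI : IsScalarTower R (R ⧸ (maximalIdeal R : Ideal R)) V :=
    Module.IsTorsionBySet.isScalarTower hT (S := R)
  haveI hart : IsArtinian (R ⧸ (maximalIdeal R : Ideal R)) V := isArtinian_of_tower R inferInstance
  letI : Field (R ⧸ (maximalIdeal R : Ideal R)) := Ideal.Quotient.field _
  haveI hnoe : IsNoetherian (R ⧸ (maximalIdeal R : Ideal R)) V :=
    (IsSemisimpleModule.finite_tfae.out 2 1).mp hart
  let emb : Submodule R V ↪o Submodule (R ⧸ (maximalIdeal R : Ideal R)) V :=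
    { toFun := fun N =>
        { carrier := N
          add_mem' := fun h1 h2 => N.add_mem h1 h2
          zero_mem' := N.zero_mem
          smul_mem' := fun c x hx => by
            obtain ⟨r, rfl⟩ := Ideal.Quotient.mk_surjective c
            rw [Module.IsTorsionBySet.mk_smul hT r x]
            exact N.smul_mem r hx }
      inj' := fun N1 N2 h => SetLike.coe_injective
        (show (N1 : Set V) = (N2 : Set V) from congrArg
          (fun (W : Submodule (R ⧸ (maximalIdeal R : Ideal R)) V) => (W : Set V)) h)
      map_rel_iff' := Iff.rfl }
  exact isNoetherian_mk ⟨emb.dual.wellFounded hnoe.wf⟩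

lemma isNoetherian_self : IsNoetherian R R := by
  obtain ⟨n, hn⟩ := IsArtinianRing.isNilpotent_jacobson_bot (R := R)
  rw [IsLocalRing.jacobson_eq_maximalIdeal ⊥ bot_ne_top] at hn
  have key : ∀ i : ℕ, IsNoetherian R (R ⧸ (maximalIdeal R ^ i : Ideal R)) := by
    intro i
    induction i with
    | zero =>
      have hsub : Subsingleton (R ⧸ (maximalIdeal R ^ 0 : Ideal R)) := by
        rw [pow_zero, Ideal.one_eq_top]
        exact Submodule.Quotient.subsingleton_iff.mpr rfl
      infer_instance
    | succ i ihi =>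
      set p : Ideal R := maximalIdeal R ^ (i + 1) with hp
      set q : Ideal R := maximalIdeal R ^ i with hq
      have hpq : p ≤ q := Ideal.pow_le_pow_right (Nat.le_succ i)
      set W : Submodule R (R ⧸ p) := Submodule.map p.mkQ q with hW
      have equiv := Submodule.quotientQuotientEquivQuotient p q hpq
      have hWnoe : IsNoetherian R W := by
        apply isNoetherian_of_torsion
        intro a ha v
        apply Subtype.ext
        obtain ⟨y, hy, hyv⟩ := v.2
        show a • (v : R ⧸ p) = 0
        rw [← hyv, ← map_smul, show a • y = a * y from rfl]
        rw [Submodule.mkQ_apply, Submodule.Quotient.mk_eq_zero]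
        rw [hp, pow_succ, mul_comm a y]
        exact Ideal.mul_mem_mul hy ha
      haveI := ihi
      exact (isNoetherian_iff_submodule_quotient W).mpr
        ⟨hWnoe, isNoetherian_of_linearEquiv equiv.symm⟩
  have e := Submodule.quotEquivOfEqBot (maximalIdeal R ^ n : Ideal R)
    (by rw [hn]; rfl)
  haveI := key n
  exact isNoetherian_of_linearEquiv e


lemma eta_bij {E : Type u} [AddCommGroup E] [Module R E] (ι : ResidueField R →ₗ[R] E)
    (hinj : Module.Injective R E) (hι : Function.Injective ι)
    (hess : ∀ N : Submodule R E, N ≠ ⊥ → N ⊓ LinearMap.range ι ≠ ⊥) :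
    ∀ (M : Type u) [AddCommGroup M] [Module R M], IsFiniteLength R M →
      Function.Bijective (eta R E M) := by
  intro M _ _ h
  induction h with
  | of_subsingleton =>
    rename_i M' _ _ hsub
    constructor
    · intro a b _
      exact Subsingleton.elim a b
    · intro Ψ
      refine ⟨0, ?_⟩
      apply LinearMap.ext; intro f
      have hf0 : f = (0 : M' →ₗ[R] E) := by
        apply LinearMap.ext; intro x
        rw [Subsingleton.elim x (0 : M')]
        exact map_zero f
      rw [hf0]
      simp
  | of_simple_quotient h ih =>
    rename_i M' _ _ N _
    constructor
    · exact eta_injective ι hinj hι M'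
    · intro Ψ
      set Dp := LinearMap.lcomp R E N.mkQ with hDp
      set Di := LinearMap.lcomp R E N.subtype with hDi
      obtain ⟨mbar, hm⟩ := (eta_bij_simple ι hinj hι hess (M' ⧸ N)).2 (Ψ ∘ₗ Dp)
      obtain ⟨m, rfl⟩ := N.mkQ_surjective mbar
      set Δ := Ψ - eta R E M' m with hΔdef
      have hΔ : Δ ∘ₗ Dp = 0 := by
        apply LinearMap.ext; intro φ
        have h2 : φ (N.mkQ m) = Ψ (Dp φ) := LinearMap.ext_iff.mp hm φ
        show Ψ (Dp φ) - (eta R E M' m) (Dp φ) = 0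
        rw [show (eta R E M' m) (Dp φ) = φ (N.mkQ m) from rfl, h2, sub_self]
      have hexact : LinearMap.range Dp = LinearMap.ker Di := by
        apply le_antisymm
        · rintro _ ⟨ψ0, rfl⟩
          rw [LinearMap.mem_ker]
          apply LinearMap.ext; intro n
          show ψ0 (N.mkQ (N.subtype n)) = 0
          rw [show N.mkQ (N.subtype n) = 0 from (Submodule.Quotient.mk_eq_zero N).mpr n.2,
            map_zero]
        · intro φ hφ
          have hz : φ ∘ₗ N.subtype = 0 := LinearMap.mem_ker.mp hφ
          obtain ⟨ψ0, hψ0⟩ := extend_exact hinj N.subtype N.mkQ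
            (by rw [Submodule.range_subtype, Submodule.ker_mkQ]) φ hz
          exact ⟨ψ0, hψ0⟩
      obtain ⟨ψ, hψ⟩ := extend_exact hinj Dp Di hexact Δ hΔ
      obtain ⟨n, hn⟩ := ih.2 ψ
      refine ⟨m + N.subtype n, ?_⟩
      apply LinearMap.ext; intro f
      show f (m + N.subtype n) = Ψ f
      have e2 : Δ f = ψ (Di f) := by rw [← hψ]; rfl
      have e3 : ψ (Di f) = f (N.subtype n) := by rw [← hn]; rfl
      have e1 : Ψ f = Δ f + f m := by
        show Ψ f = Ψ f - (eta R E M' m) f + f m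
        rw [eta_apply, sub_add_cancel]
      rw [map_add, e1, e2, e3, add_comm]

noncomputable def matlis {E : Type u} [AddCommGroup E] [Module R E]
    (ι : ResidueField R →ₗ[R] E) (hinj : Module.Injective R E) (hι : Function.Injective ι)
    (hess : ∀ N : Submodule R E, N ≠ ⊥ → N ⊓ LinearMap.range ι ≠ ⊥) :
    R ≃ₗ[R] (E →ₗ[R] E) := by
  have hfl : IsFiniteLength R R := by
    rw [isFiniteLength_iff_isNoetherian_isArtinian]
    exact ⟨isNoetherian_self, inferInstance⟩
  have hb := eta_bij ι hinj hι hess R hfl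
  exact (LinearEquiv.ofBijective (eta R E R) hb).trans
    (LinearEquiv.arrowCongr (LinearMap.ringLmapEquivSelf R R E) (LinearEquiv.refl R E))

end Artinian

end Stmt15Aux

theorem stmt15 (R : Type u) [CommRing R] [IsArtinianRing R] [IsLocalRing R]
    (E : Type u) [AddCommGroup E] [Module R E] (ι : ResidueField R →ₗ[R] E)
    (hE : IsInjectiveEnvelopeOfResidueField R E ι) :
    ∃ L : Submodule R (E →ₗ[R] R),
      maximalIdeal R • L = ⊥ ∧
        ∀ t : ℕ,
          Nonempty ((Submodule.torsionBySet R R (maximalIdeal R : Set R)) ≃ₗ[R]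
            (Fin t → ResidueField R)) →
          Nonempty (L ≃ₗ[R] (Fin (t * t) → ResidueField R)) := by
  obtain ⟨hinj, hι, hess⟩ := hE
  refine ⟨Submodule.torsionBySet R (E →ₗ[R] R) (maximalIdeal R : Set R), ?_, ?_⟩
  · refine le_antisymm (Submodule.smul_le.mpr ?_) bot_le
    intro r hr f hf
    rw [Submodule.mem_bot]
    exact (Submodule.mem_torsionBySet_iff _ _).mp hf ⟨r, hr⟩
  · rintro t ⟨σ⟩
    have μ := Stmt15Aux.matlis ι hinj hι hess
    have hk : (E →ₗ[R] ResidueField R) ≃ₗ[R]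
        (Submodule.torsionBySet R R (maximalIdeal R : Set R)) :=
      (LinearEquiv.arrowCongr (LinearEquiv.refl R E) (LinearEquiv.ofInjective ι hι)).trans <|
        (LinearEquiv.arrowCongr (LinearEquiv.refl R E)
          (LinearEquiv.ofEq _ _ (Stmt15Aux.socE_eq ι hι hess).symm)).trans <|
        (Stmt15Aux.torsionHomEquiv E E _).symm.trans (Stmt15Aux.torsionCongr μ.symm _)
    exact ⟨(Stmt15Aux.torsionHomEquiv E R _).trans <|
      (LinearEquiv.arrowCongr (LinearEquiv.refl R E) σ).trans <|
      (Stmt15Aux.homPiEquiv E (ResidueField R)).trans <|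
      (LinearEquiv.piCongrRight (fun _ => hk)).trans <|
      (LinearEquiv.piCongrRight (fun _ => σ)).trans <|
      ((LinearEquiv.curry R (ResidueField R) (Fin t) (Fin t)).symm).trans
        (LinearEquiv.funCongrLeft R (ResidueField R) finProdFinEquiv.symm)⟩
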